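/- Bounded drift of the discounted state distribution under KL-constrained interpolation (Lemma on bounded stationary distributions): Let π_{K+1} and π_K be policies of a finite MDP with π_K(s,a) > 0 for all s, a, suppose max_{s∈S} D_KL(π_{K+1}(s,·) ‖ π_K(s,·)) ≤ 2C for some C ≥ 0, let ζ ∈ [0,1], and define π̃(s,a) = ζ·π_{K+1}(s,a) + (1−ζ)·π_K(s,a). Then ∑_{s∈S} |d^{π̃}(s) − d^{π_K}(s)| ≤ (2ζγ/(1−γ)²)·√C. -/

import Mathlib

open Finset

/-- A finite Markov decision process with bounded rewards and discount `γ ∈ (0,1)`. -/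
structure FiniteMDP (S A : Type) [Fintype S] [Fintype A] : Type where
  P : S → A → S → ℝ
  r : S → A → ℝ
  γ : ℝ
  s0 : S
  P_nonneg : ∀ s a s', 0 ≤ P s a s'
  P_sum_one : ∀ s a, ∑ s', P s a s' = 1
  r_bound : ∀ s a, |r s a| ≤ 1
  γ_pos : 0 < γ
  γ_lt_one : γ < 1

variable {S A : Type} [Fintype S] [Fintype A] [DecidableEq S]

/-- `π` is a (stochastic) policy. -/
def IsPolicy (π : S → A → ℝ) : Prop :=
  (∀ s a, 0 ≤ π s a) ∧ ∀ s, ∑ a, π s a = 1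

/-- `Q` satisfies the Bellman equation of policy `π`. -/
def IsQ (M : FiniteMDP S A) (π Q : S → A → ℝ) : Prop :=
  ∀ s a, Q s a = M.r s a + M.γ * ∑ s', M.P s a s' * ∑ a', π s' a' * Q s' a'

/-- `d` is the discounted state (occupancy) distribution of policy `π`. -/
def IsD (M : FiniteMDP S A) (π : S → A → ℝ) (d : S → ℝ) : Prop :=
  ∀ s', d s' = (1 - M.γ) * (if s' = M.s0 then (1 : ℝ) else 0)
      + M.γ * ∑ s, d s * ∑ a, π s a * M.P s a s'

/-- The normalized return `J^π = ∑_s d^π(s) ∑_a π(s,a) r(s,a)`. -/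
def Jret (M : FiniteMDP S A) (π : S → A → ℝ) (d : S → ℝ) : ℝ :=
  ∑ s, d s * ∑ a, π s a * M.r s a

/-- The policy advantage function `A^{π'}_π(s) = ∑_a (π'(s,a) − π(s,a)) Q_π(s,a)`. -/
def polAdv (π' π Q : S → A → ℝ) (s : S) : ℝ :=
  ∑ a, (π' s a - π s a) * Q s a

/-- The expected policy advantage `A^{π'}_{π,d}`. -/
def expPolAdv (π' π Q : S → A → ℝ) (d : S → ℝ) : ℝ :=
  ∑ s, d s * polAdv π' π Q s

/-- `δ(π',π) = max_s ∑_a |π'(s,a) − π(s,a)|`. -/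
noncomputable def polDist (π' π : S → A → ℝ) : ℝ :=
  ⨆ s : S, ∑ a, |π' s a - π s a|

/-- `ΔA^{π'}_π = max_{s,s'} |A^{π'}_π(s) − A^{π'}_π(s')|`. -/
noncomputable def advRange (π' π Q : S → A → ℝ) : ℝ :=
  ⨆ p : S × S, |polAdv π' π Q p.1 - polAdv π' π Q p.2|

/-- Kullback–Leibler divergence between probability vectors on a finite set. -/
noncomputable def KLdiv {B : Type} [Fintype B] (p q : B → ℝ) : ℝ :=
  ∑ a ∈ Finset.univ.filter (fun a => 0 < p a), p a * Real.log (p a / q a)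


section PinskerAux

open Real in
private lemma hasDerivAt_phi' {t : ℝ} (ht : 0 < t) :
    HasDerivAt (fun t : ℝ => (4*t+4) * Real.log t - 8*(t-1))
      ((4*t+4) * t⁻¹ + 4 * Real.log t - 8) t := by
  have h1 : HasDerivAt (fun t : ℝ => (4*t+4)) 4 t := by
    simpa using ((hasDerivAt_id t).const_mul (4:ℝ)).add_const 4
  have h2 : HasDerivAt Real.log t⁻¹ t := Real.hasDerivAt_log ht.ne'
  have := (h1.mul h2).sub (((hasDerivAt_id t).sub_const 1).const_mul 8)
  refine this.congr_deriv ?_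
  ring

private lemma phi_deriv_nonneg' {t : ℝ} (ht : 0 < t) :
    0 ≤ (4*t+4) * t⁻¹ + 4 * Real.log t - 8 := by
  have h : Real.log t⁻¹ ≤ t⁻¹ - 1 := Real.log_le_sub_one_of_pos (by positivity)
  rw [Real.log_inv] at h
  have h2 : 1 - t⁻¹ ≤ Real.log t := by linarith
  have h3 : (4*t+4) * t⁻¹ = 4 + 4 * t⁻¹ := by field_simp
  nlinarith [mul_pos ht (inv_pos.mpr ht), mul_inv_cancel₀ ht.ne']

private lemma phi_sign' {t : ℝ} (ht : 0 < t) :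
    (1 ≤ t → 0 ≤ (4*t+4) * Real.log t - 8*(t-1)) ∧
    (t ≤ 1 → (4*t+4) * Real.log t - 8*(t-1) ≤ 0) := by
  set φ : ℝ → ℝ := fun t => (4*t+4) * Real.log t - 8*(t-1) with hφ
  have hmono : MonotoneOn φ (Set.Ioi (0:ℝ)) := by
    apply monotoneOn_of_deriv_nonneg (convex_Ioi 0)
    · exact ContinuousOn.sub (ContinuousOn.mul (by fun_prop)
        (Real.continuousOn_log.mono (by intro x hx; exact ne_of_gt hx))) (by fun_prop)
    · intro x hx
      rw [interior_Ioi] at hx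
      exact (hasDerivAt_phi' hx).differentiableAt.differentiableWithinAt
    · intro x hx
      rw [interior_Ioi] at hx
      rw [(hasDerivAt_phi' hx).deriv]
      exact phi_deriv_nonneg' hx
  have h1 : φ 1 = 0 := by simp [hφ]
  constructor
  · intro h; have := hmono (Set.mem_Ioi.mpr one_pos) (Set.mem_Ioi.mpr ht) h
    rw [h1] at this; exact this
  · intro h; have := hmono (Set.mem_Ioi.mpr ht) (Set.mem_Ioi.mpr one_pos) h
    rw [h1] at this; exact this

private lemma hasDerivAt_g' {t : ℝ} (ht : 0 < t) :
    HasDerivAt (fun t : ℝ => (2*t+4) * (t * Real.log t - t + 1) - 3*(t-1)^2)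
      ((4*t+4) * Real.log t - 8*(t-1)) t := by
  have h1 : HasDerivAt (fun t : ℝ => (2*t+4)) 2 t := by
    simpa using ((hasDerivAt_id t).const_mul (2:ℝ)).add_const 4
  have h2 : HasDerivAt (fun t : ℝ => t * Real.log t - t + 1) (Real.log t + 1 - 1) t :=
    ((Real.hasDerivAt_mul_log ht.ne').sub (hasDerivAt_id t)).add_const 1
  have h3 : HasDerivAt (fun t : ℝ => 3*(t-1)^2) (3*(2*(t-1))) t := by
    simpa using (((hasDerivAt_id t).sub_const 1).pow 2).const_mul (3:ℝ)
  have := (h1.mul h2).sub h3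
  refine this.congr_deriv ?_
  ring

private lemma g_cont' : ContinuousOn
    (fun t : ℝ => (2*t+4) * (t * Real.log t - t + 1) - 3*(t-1)^2) {t : ℝ | t ≠ 0} := by
  apply ContinuousOn.sub _ (by fun_prop)
  apply ContinuousOn.mul (by fun_prop)
  apply ContinuousOn.add (ContinuousOn.sub _ (by fun_prop)) (by fun_prop)
  exact ContinuousOn.mul (by fun_prop) (Real.continuousOn_log.mono (by intro x hx; exact hx))

private lemma g_nonneg' {t : ℝ} (ht : 0 ≤ t) :
    0 ≤ (2*t+4) * (t * Real.log t - t + 1) - 3*(t-1)^2 := by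
  rcases eq_or_lt_of_le ht with h | ht
  · simp [← h]; norm_num
  set g : ℝ → ℝ := fun t => (2*t+4) * (t * Real.log t - t + 1) - 3*(t-1)^2 with hg
  have hg1 : g 1 = 0 := by simp [hg]
  rcases le_total 1 t with h | h
  · have hmono : MonotoneOn g (Set.Ici (1:ℝ)) := by
      apply monotoneOn_of_deriv_nonneg (convex_Ici 1)
      · exact g_cont'.mono (by intro x hx; simp at hx ⊢; linarith)
      · intro x hx
        rw [interior_Ici] at hx
        exact (hasDerivAt_g' (by linarith [Set.mem_Ioi.mp hx])).differentiableAt.differentiableWithinAt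
      · intro x hx
        rw [interior_Ici] at hx
        have hx1 : (1:ℝ) < x := hx
        rw [(hasDerivAt_g' (by linarith)).deriv]
        exact (phi_sign' (by linarith)).1 hx1.le
    have := hmono (Set.mem_Ici.mpr le_rfl) (Set.mem_Ici.mpr h) h
    rw [hg1] at this; exact this
  · have hanti : AntitoneOn g (Set.Ioc (0:ℝ) 1) := by
      apply antitoneOn_of_deriv_nonpos (convex_Ioc 0 1)
      · exact g_cont'.mono (by intro x hx; simp at hx ⊢; linarith [hx.1])
      · intro x hx
        rw [interior_Ioc] at hx
        exact (hasDerivAt_g' hx.1).differentiableAt.differentiableWithinAt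
      · intro x hx
        rw [interior_Ioc] at hx
        rw [(hasDerivAt_g' hx.1).deriv]
        exact (phi_sign' hx.1).2 hx.2.le
    have := hanti (Set.mem_Ioc.mpr ⟨ht, h⟩) (Set.mem_Ioc.mpr ⟨one_pos, le_rfl⟩) h
    rw [hg1] at this; exact this

private lemma pointwise_kl' {p q : ℝ} (hp : 0 ≤ p) (hq : 0 < q) :
    3 * (p - q)^2 / (2*p + 4*q) ≤ p * Real.log (p / q) - (p - q) := by
  have hd : 0 < 2*p + 4*q := by linarith
  rw [div_le_iff₀ hd]
  have hg := g_nonneg' (t := p / q) (by positivity)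
  have h2 : 0 ≤ q^2 * ((2*(p/q)+4) * ((p/q) * Real.log (p/q) - (p/q) + 1) - 3*((p/q)-1)^2) :=
    mul_nonneg (by positivity) hg
  have h3 : q^2 * ((2*(p/q)+4) * ((p/q) * Real.log (p/q) - (p/q) + 1) - 3*((p/q)-1)^2)
      = (p * Real.log (p/q) - (p - q)) * (2*p + 4*q) - 3*(p-q)^2 := by
    field_simp
    ring
  linarith [h3 ▸ h2]

private lemma pinsker' {B : Type} [Fintype B] (p q : B → ℝ)
    (hp0 : ∀ a, 0 ≤ p a) (hp1 : ∑ a, p a = 1)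
    (hq0 : ∀ a, 0 < q a) (hq1 : ∑ a, q a = 1) :
    (∑ a, |p a - q a|)^2 ≤ 2 * KLdiv p q := by
  set k : B → ℝ := fun a => p a * Real.log (p a / q a) - (p a - q a) with hk
  have hklow : ∀ a, 3 * (p a - q a)^2 / (2*p a + 4*q a) ≤ k a :=
    fun a => pointwise_kl' (hp0 a) (hq0 a)
  have hden : ∀ a : B, (0:ℝ) < 2*p a + 4*q a := fun a => by
    have h1 := hp0 a; have h2 := hq0 a; linarith
  have hknn : ∀ a, 0 ≤ k a := fun a =>
    le_trans (div_nonneg (by positivity) (hden a).le) (hklow a)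
  have hKL : KLdiv p q = ∑ a, k a := by
    have h1 : KLdiv p q = ∑ a, p a * Real.log (p a / q a) := by
      unfold KLdiv
      refine Finset.sum_subset (Finset.filter_subset _ _) ?_
      intro x _ hx
      simp only [Finset.mem_filter, Finset.mem_univ, true_and, not_lt] at hx
      have : p x = 0 := le_antisymm hx (hp0 x)
      simp [this]
    rw [h1, hk]
    simp [Finset.sum_sub_distrib, hp1, hq1]
  have habs : ∀ a : B, |p a - q a| =
      (|p a - q a| * Real.sqrt (3 / (2*p a + 4*q a))) * Real.sqrt ((2*p a + 4*q a) / 3) := by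
    intro a
    rw [mul_assoc, ← Real.sqrt_mul (div_nonneg (by norm_num) (hden a).le)]
    have : 3 / (2*p a + 4*q a) * ((2*p a + 4*q a) / 3) = 1 := by
      have hne := (hden a).ne'
      field_simp
    rw [this, Real.sqrt_one, mul_one]
  calc (∑ a, |p a - q a|)^2
      = (∑ a, (|p a - q a| * Real.sqrt (3 / (2*p a + 4*q a))) * Real.sqrt ((2*p a + 4*q a) / 3))^2 := by
        congr 1; exact Finset.sum_congr rfl (fun a _ => habs a)
    _ ≤ (∑ a, (|p a - q a| * Real.sqrt (3 / (2*p a + 4*q a)))^2) *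
        (∑ a, (Real.sqrt ((2*p a + 4*q a) / 3))^2) := Finset.sum_mul_sq_le_sq_mul_sq _ _ _
    _ ≤ (∑ a, k a) * 2 := by
        apply mul_le_mul
        · apply Finset.sum_le_sum
          intro a _
          rw [mul_pow, sq_abs, Real.sq_sqrt (div_nonneg (by norm_num) (hden a).le)]
          calc (p a - q a)^2 * (3 / (2*p a + 4*q a))
              = 3 * (p a - q a)^2 / (2*p a + 4*q a) := by ring
            _ ≤ k a := hklow a
        · have h5 : ∀ a : B, (Real.sqrt ((2*p a + 4*q a) / 3))^2 = (2*p a + 4*q a)/3 :=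
            fun a => Real.sq_sqrt (by have := hden a; positivity)
          rw [Finset.sum_congr rfl (fun a _ => h5 a)]
          have h6 : ∑ a, (2*p a + 4*q a)/3 = 2 := by
            rw [← Finset.sum_div, Finset.sum_add_distrib, ← Finset.mul_sum, ← Finset.mul_sum,
              hp1, hq1]
            norm_num
          rw [h6]
        · positivity
        · exact Finset.sum_nonneg (fun a _ => hknn a)
    _ = 2 * KLdiv p q := by rw [hKL]; ring

end PinskerAux

private lemma sum_abs_d_le_one' {S A : Type} [Fintype S] [Fintype A] [DecidableEq S]
    (M : FiniteMDP S A) (π : S → A → ℝ) (d : S → ℝ)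
    (hπ : IsPolicy π) (hd : IsD M π d) : ∑ s, |d s| ≤ 1 := by
  have h1γ : (0:ℝ) < 1 - M.γ := by linarith [M.γ_lt_one]
  have hw : ∀ s s', 0 ≤ ∑ a, π s a * M.P s a s' :=
    fun s s' => Finset.sum_nonneg fun a _ => mul_nonneg (hπ.1 s a) (M.P_nonneg s a s')
  have hw1 : ∀ s, ∑ s', ∑ a, π s a * M.P s a s' = 1 := by
    intro s
    rw [Finset.sum_comm]
    have h : ∀ a, ∑ s', π s a * M.P s a s' = π s a := fun a => by
      rw [← Finset.mul_sum, M.P_sum_one, mul_one]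
    rw [Finset.sum_congr rfl fun a _ => h a, hπ.2]
  have key : ∀ s', |d s'| ≤ (1 - M.γ) * (if s' = M.s0 then 1 else 0)
      + M.γ * ∑ s, |d s| * ∑ a, π s a * M.P s a s' := by
    intro s'
    rw [hd s']
    refine (abs_add_le _ _).trans (add_le_add ?_ ?_)
    · rw [abs_of_nonneg (mul_nonneg h1γ.le (by split_ifs <;> norm_num))]
    · rw [abs_mul, abs_of_nonneg M.γ_pos.le]
      apply mul_le_mul_of_nonneg_left _ M.γ_pos.le
      refine (Finset.abs_sum_le_sum_abs _ _).trans (Finset.sum_le_sum fun s _ => ?_)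
      rw [abs_mul, abs_of_nonneg (hw s s')]
  have hsum := Finset.sum_le_sum fun s' (_ : s' ∈ Finset.univ) => key s'
  rw [Finset.sum_add_distrib] at hsum
  have e1 : ∑ s', (1 - M.γ)*(if s' = M.s0 then (1:ℝ) else 0) = 1 - M.γ := by
    rw [← Finset.mul_sum]; simp
  have e2 : ∑ s', M.γ * ∑ s, |d s| * ∑ a, π s a * M.P s a s' = M.γ * ∑ s, |d s| := by
    rw [← Finset.mul_sum, Finset.sum_comm]
    congr 1
    refine Finset.sum_congr rfl fun s _ => ?_
    rw [← Finset.mul_sum, hw1 s, mul_one]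
  rw [e1, e2] at hsum
  nlinarith [M.γ_lt_one]

/-- **Bounded drift of the discounted state distribution under KL-constrained
interpolation**: `∑_s |d^{π̃}(s) − d^{π_K}(s)| ≤ (2ζγ/(1−γ)²)·√C`. -/
theorem occupancy_drift_kl_interpolation
    {S A : Type} [Fintype S] [Fintype A] [DecidableEq S] [Nonempty S] [Nonempty A]
    (M : FiniteMDP S A) (πK1 πK : S → A → ℝ) (C ζ : ℝ) (πt : S → A → ℝ) (dt d : S → ℝ)
    (hπK1 : IsPolicy πK1) (hπK : IsPolicy πK) (hπKpos : ∀ s a, 0 < πK s a)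
    (hC : 0 ≤ C)
    (hKL : (⨆ s : S, KLdiv (πK1 s) (πK s)) ≤ 2 * C)
    (hζ0 : 0 ≤ ζ) (hζ1 : ζ ≤ 1)
    (hmix : ∀ s a, πt s a = ζ * πK1 s a + (1 - ζ) * πK s a)
    (hdt : IsD M πt dt) (hd : IsD M πK d) :
    ∑ s, |dt s - d s| ≤ (2 * ζ * M.γ / (1 - M.γ) ^ 2) * Real.sqrt C := by
  obtain ⟨hπK1n, hπK1s⟩ := hπK1
  obtain ⟨hπKn, hπKs⟩ := hπK
  have hγ0 := M.γ_pos
  have hγ1 := M.γ_lt_one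
  have h1γ : (0:ℝ) < 1 - M.γ := by linarith
  -- πt is a policy
  have hπtn : ∀ s a, 0 ≤ πt s a := fun s a => by
    rw [hmix s a]
    have h1 := hπK1n s a; have h2 := hπKn s a
    nlinarith
  have hπts : ∀ s, ∑ a, πt s a = 1 := fun s => by
    simp only [hmix]
    rw [Finset.sum_add_distrib, ← Finset.mul_sum, ← Finset.mul_sum, hπK1s, hπKs]
    ring
  -- per-state Pinsker bound
  have hpin : ∀ s, ∑ a, |πK1 s a - πK s a| ≤ 2 * Real.sqrt C := by
    intro s
    have hKLs : KLdiv (πK1 s) (πK s) ≤ 2 * C :=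
      le_trans (le_ciSup (f := fun s : S => KLdiv (πK1 s) (πK s)) (Set.Finite.bddAbove (Set.finite_range _)) s) hKL
    have hps := pinsker' (πK1 s) (πK s) (hπK1n s) (hπK1s s) (hπKpos s) (hπKs s)
    have h4 : (∑ a, |πK1 s a - πK s a|)^2 ≤ 4 * C := by linarith
    have hnn : 0 ≤ ∑ a, |πK1 s a - πK s a| := Finset.sum_nonneg fun a _ => abs_nonneg _
    nlinarith [Real.sq_sqrt hC, Real.sqrt_nonneg C]
  have hEt : ∀ s, ∑ a, |πt s a - πK s a| ≤ ζ * (2 * Real.sqrt C) := by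
    intro s
    have h : ∀ a, |πt s a - πK s a| = ζ * |πK1 s a - πK s a| := by
      intro a
      rw [hmix s a]
      have h5 : ζ * πK1 s a + (1 - ζ) * πK s a - πK s a = ζ * (πK1 s a - πK s a) := by ring
      rw [h5, abs_mul, abs_of_nonneg hζ0]
    rw [Finset.sum_congr rfl fun a _ => h a, ← Finset.mul_sum]
    exact mul_le_mul_of_nonneg_left (hpin s) hζ0
  -- transition kernel facts
  have hwtn : ∀ s s', 0 ≤ ∑ a, πt s a * M.P s a s' :=
    fun s s' => Finset.sum_nonneg fun a _ => mul_nonneg (hπtn s a) (M.P_nonneg s a s')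
  have hwt1 : ∀ s, ∑ s', ∑ a, πt s a * M.P s a s' = 1 := by
    intro s
    rw [Finset.sum_comm]
    have h : ∀ a, ∑ s', πt s a * M.P s a s' = πt s a := fun a => by
      rw [← Finset.mul_sum, M.P_sum_one, mul_one]
    rw [Finset.sum_congr rfl fun a _ => h a, hπts s]
  -- key per-state drift bound
  have key : ∀ s', |dt s' - d s'| ≤
      M.γ * ∑ s, |dt s - d s| * (∑ a, πt s a * M.P s a s')
      + M.γ * ∑ s, |d s| * (∑ a, |πt s a - πK s a| * M.P s a s') := by
    intro s'
    have hdiff : dt s' - d s' =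
        M.γ * (∑ s, (dt s - d s) * (∑ a, πt s a * M.P s a s'))
        + M.γ * (∑ s, d s * (∑ a, (πt s a - πK s a) * M.P s a s')) := by
      rw [hdt s', hd s']
      simp only [sub_mul, mul_sub, Finset.sum_sub_distrib]
      ring
    rw [hdiff]
    refine (abs_add_le _ _).trans (add_le_add ?_ ?_)
    · rw [abs_mul, abs_of_nonneg hγ0.le]
      apply mul_le_mul_of_nonneg_left _ hγ0.le
      refine (Finset.abs_sum_le_sum_abs _ _).trans (Finset.sum_le_sum fun s _ => ?_)
      rw [abs_mul, abs_of_nonneg (hwtn s s')]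
    · rw [abs_mul, abs_of_nonneg hγ0.le]
      apply mul_le_mul_of_nonneg_left _ hγ0.le
      refine (Finset.abs_sum_le_sum_abs _ _).trans (Finset.sum_le_sum fun s _ => ?_)
      rw [abs_mul]
      apply mul_le_mul_of_nonneg_left _ (abs_nonneg _)
      refine (Finset.abs_sum_le_sum_abs _ _).trans (Finset.sum_le_sum fun a _ => ?_)
      rw [abs_mul, abs_of_nonneg (M.P_nonneg s a s')]
  have hsum := Finset.sum_le_sum fun s' (_ : s' ∈ Finset.univ) => key s'
  rw [Finset.sum_add_distrib] at hsum
  have e1 : ∑ s', M.γ * ∑ s, |dt s - d s| * (∑ a, πt s a * M.P s a s')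
      = M.γ * ∑ s, |dt s - d s| := by
    rw [← Finset.mul_sum, Finset.sum_comm]
    congr 1
    refine Finset.sum_congr rfl fun s _ => ?_
    rw [← Finset.mul_sum, hwt1 s, mul_one]
  have e2 : ∑ s', M.γ * ∑ s, |d s| * (∑ a, |πt s a - πK s a| * M.P s a s')
      ≤ M.γ * (ζ * (2 * Real.sqrt C)) := by
    rw [← Finset.mul_sum, Finset.sum_comm]
    apply mul_le_mul_of_nonneg_left _ hγ0.le
    calc ∑ s, ∑ s', |d s| * (∑ a, |πt s a - πK s a| * M.P s a s')
        = ∑ s, |d s| * (∑ a, |πt s a - πK s a|) := by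
          refine Finset.sum_congr rfl fun s _ => ?_
          rw [← Finset.mul_sum, Finset.sum_comm]
          congr 1
          refine Finset.sum_congr rfl fun a _ => ?_
          rw [← Finset.mul_sum, M.P_sum_one, mul_one]
      _ ≤ ∑ s, |d s| * (ζ * (2 * Real.sqrt C)) := Finset.sum_le_sum fun s _ =>
          mul_le_mul_of_nonneg_left (hEt s) (abs_nonneg _)
      _ = (∑ s, |d s|) * (ζ * (2 * Real.sqrt C)) := by rw [← Finset.sum_mul]
      _ ≤ 1 * (ζ * (2 * Real.sqrt C)) :=
          mul_le_mul_of_nonneg_right (sum_abs_d_le_one' M πK d ⟨hπKn, hπKs⟩ hd)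
            (by positivity)
      _ = ζ * (2 * Real.sqrt C) := one_mul _
  rw [e1] at hsum
  have hDle : ∑ s, |dt s - d s| ≤ M.γ * ∑ s, |dt s - d s| + M.γ * (ζ * (2 * Real.sqrt C)) :=
    le_trans hsum (add_le_add_right e2 _)
  have htgt : (2 * ζ * M.γ / (1 - M.γ) ^ 2) * Real.sqrt C
      = (2 * ζ * M.γ * Real.sqrt C) / (1 - M.γ)^2 := by ring
  rw [htgt, le_div_iff₀ (by positivity : (0:ℝ) < (1 - M.γ)^2)]
  have hN : 0 ≤ 2 * ζ * M.γ * Real.sqrt C := by positivity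
  have hD0 : 0 ≤ ∑ s, |dt s - d s| := Finset.sum_nonneg fun s _ => abs_nonneg _
  nlinarith [Real.sqrt_nonneg C, mul_nonneg hD0 h1γ.le, mul_nonneg hN h1γ.le]
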